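/- Jung's theorem in the plane: if a set S ⊆ ℝ² has diameter at most D (every two points of S are at distance ≤ D), then S is contained in a closed disk of radius D/√3. -/

import Mathlib

open Metric Finset RealInnerProductSpace

local notation "E2" => EuclideanSpace ℝ (Fin 2)

lemma jung_arith {x a b : ℝ} (h1 : 1 ≤ x) (h3 : x ≤ 3) (hb : 0 ≤ b)
    (hk : x * (2 * a) ≤ (x - 1) * b) : 3 * a ≤ b := by
  nlinarith [mul_nonneg (sub_nonneg.2 h3) hb]

/-- Existence of a minimizer of the max-distance to a finite set. -/
lemma jung_exists_min (I : Finset E2) (hI : I.Nonempty) :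
    ∃ p : E2, ∀ q : E2, I.sup' hI (fun x => dist p x) ≤ I.sup' hI (fun x => dist q x) := by
  classical
  have hI2 := hI
  obtain ⟨x0, hx0⟩ := hI2
  set f : E2 → ℝ := fun q => I.sup' hI (fun x => dist q x) with hf
  have hcont : Continuous f := by
    rw [continuous_iff_continuousAt]
    intro q
    exact ContinuousAt.finset_sup'_apply hI fun x _ =>
      (Continuous.dist continuous_id continuous_const).continuousAt
  have hK : IsCompact (closedBall x0 (f x0)) := isCompact_closedBall _ _
  have hx0K : x0 ∈ closedBall x0 (f x0) := by
    simp only [mem_closedBall, dist_self]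
    exact le_trans dist_nonneg (Finset.le_sup' (fun x => dist x0 x) hx0)
  obtain ⟨p, hpK, hpmin⟩ := hK.exists_isMinOn ⟨x0, hx0K⟩ hcont.continuousOn
  refine ⟨p, fun q => ?_⟩
  by_cases hq : q ∈ closedBall x0 (f x0)
  · exact hpmin hq
  · have h1 : f x0 < dist q x0 := by
      simpa [mem_closedBall, dist_comm] using hq
    have h2 : dist q x0 ≤ f q := Finset.le_sup' (fun x => dist q x) hx0
    exact le_trans (hpmin hx0K) (le_of_lt (lt_of_lt_of_le h1 h2))

lemma jung_finset (D : ℝ) (hD0 : 0 ≤ D) (I : Finset E2) (hcard : I.card ≤ 3)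
    (h : ∀ x ∈ I, ∀ y ∈ I, dist x y ≤ D) :
    ∃ p : E2, ∀ x ∈ I, dist p x ≤ D / Real.sqrt 3 := by
  classical
  rcases I.eq_empty_or_nonempty with rfl | hI
  · exact ⟨0, by simp⟩
  obtain ⟨p, hp⟩ := jung_exists_min I hI
  set r := I.sup' hI (fun x => dist p x) with hrdef
  have hrI : ∀ x ∈ I, dist p x ≤ r := fun x hx => Finset.le_sup' _ hx
  have hDr : 0 ≤ D / Real.sqrt 3 := by positivity
  suffices hrD : r ≤ D / Real.sqrt 3 by
    exact ⟨p, fun x hx => le_trans (hrI x hx) hrD⟩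
  -- the set of points at maximal distance
  set T := I.filter (fun x => dist p x = r) with hTdef
  have hTsub : T ⊆ I := Finset.filter_subset _ _
  obtain ⟨x0, hx0, hx0r⟩ := Finset.exists_mem_eq_sup' hI (fun x => dist p x)
  have hTne : T.Nonempty := ⟨x0, Finset.mem_filter.2 ⟨hx0, hx0r.symm⟩⟩
  have hr0 : 0 ≤ r := le_trans dist_nonneg (hrI x0 hx0)
  have hTr : ∀ x ∈ T, dist p x = r := fun x hx => (Finset.mem_filter.1 hx).2
  rcases eq_or_lt_of_le hr0 with hreq | hrpos
  · rw [← hreq]; exact hDr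
  -- p lies in the convex hull of T
  have hpT : p ∈ convexHull ℝ (T : Set E2) := by
    by_contra hpc
    obtain ⟨f, u, hfu, hub⟩ := geometric_hahn_banach_point_closed
      (convex_convexHull ℝ _) (T.finite_toSet.isClosed_convexHull (𝕜 := ℝ)) hpc
    set v : E2 := (InnerProductSpace.toDual ℝ E2).symm f with hvdef
    have hvb : ∀ b : E2, ⟪v, b⟫ = f b := fun b => InnerProductSpace.toDual_symm_apply
    set δ := u - f p with hδdef
    have hδ0 : 0 < δ := sub_pos.2 hfu
    have hvt : ∀ t ∈ T, δ ≤ ⟪v, t - p⟫ := by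
      intro t ht
      have : u < f t := hub t (subset_convexHull ℝ _ ht)
      rw [hvb, map_sub]
      linarith
    have hv0 : v ≠ 0 := by
      intro hv
      obtain ⟨t, ht⟩ := hTne
      have := hvt t ht
      rw [hv, inner_zero_left] at this
      linarith
    have hvn : 0 < ‖v‖ := norm_pos_iff.2 hv0
    set s := I \ T with hsdef
    set m : ℝ := if hs : s.Nonempty then s.inf' hs (fun x => r - dist p x) else 1 with hmdef
    have hm0 : 0 < m := by
      rw [hmdef]
      split_ifs with hs
      · apply (Finset.lt_inf'_iff _).2
        intro x hx
        obtain ⟨hxI, hxT⟩ := Finset.mem_sdiff.1 hx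
        have h1 : dist p x ≤ r := hrI x hxI
        have h2 : dist p x ≠ r := fun heq => hxT (Finset.mem_filter.2 ⟨hxI, heq⟩)
        have := lt_of_le_of_ne h1 h2
        linarith
      · exact one_pos
    set ε : ℝ := min (δ / ‖v‖ ^ 2) (m / (2 * ‖v‖)) with hεdef
    have hε0 : 0 < ε := lt_min (by positivity) (by positivity)
    have hεv2 : ε * ‖v‖ ^ 2 < 2 * δ := by
      have h1 : ε ≤ δ / ‖v‖ ^ 2 := min_le_left _ _
      have h2 : ε * ‖v‖ ^ 2 ≤ δ := by
        rw [← le_div_iff₀ (by positivity)]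
        exact h1
      linarith
    have hεvm : ε * ‖v‖ < m := by
      have h1 : ε ≤ m / (2 * ‖v‖) := min_le_right _ _
      have h2 : ε * ‖v‖ ≤ m / 2 := by
        rw [le_div_iff₀ (by norm_num : (0:ℝ) < 2)]
        calc ε * ‖v‖ * 2 = ε * (2 * ‖v‖) := by ring
        _ ≤ m / (2 * ‖v‖) * (2 * ‖v‖) := by
            apply mul_le_mul_of_nonneg_right h1 (by positivity)
        _ = m := by field_simp
      linarith
    set p' : E2 := p + ε • v with hp'def
    have hall : ∀ x ∈ I, dist p' x < r := by
      intro x hx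
      by_cases hxT : x ∈ T
      · -- distance strictly decreases
        have hkey : dist p' x ^ 2 < r ^ 2 := by
          have hexp : dist p' x ^ 2
              = ε ^ 2 * ‖v‖ ^ 2 - 2 * ε * ⟪v, x - p⟫ + dist p x ^ 2 := by
            rw [dist_eq_norm, dist_eq_norm]
            have : p' - x = ε • v + (p - x) := by rw [hp'def]; abel
            rw [this, norm_add_sq_real, norm_smul, real_inner_smul_left,
              inner_sub_right]
            have hpx : ⟪v, p⟫ - ⟪v, x⟫ = -(⟪v, x - p⟫) := by
              rw [inner_sub_right]; ring
            simp only [Real.norm_eq_abs]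
            rw [mul_pow, sq_abs]
            nlinarith [hpx]
          rw [hexp, hTr x hxT]
          have h1 : δ ≤ ⟪v, x - p⟫ := hvt x hxT
          nlinarith [hε0, hεv2, hδ0]
        have := lt_of_pow_lt_pow_left₀ 2 hr0 hkey
        exact this
      · have hxs : x ∈ s := Finset.mem_sdiff.2 ⟨hx, hxT⟩
        have hmx : m ≤ r - dist p x := by
          rw [hmdef]
          rw [dif_pos ⟨x, hxs⟩]
          exact Finset.inf'_le _ hxs
        calc dist p' x ≤ dist p' p + dist p x := dist_triangle _ _ _
        _ = ε * ‖v‖ + dist p x := by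
            rw [dist_eq_norm]
            have : p' - p = ε • v := by rw [hp'def]; abel
            rw [this, norm_smul, Real.norm_eq_abs, abs_of_pos hε0]
        _ < m + dist p x := by linarith
        _ ≤ r := by linarith
    have hsup := hp p'
    obtain ⟨x1, hx1, hx1e⟩ := Finset.exists_mem_eq_sup' hI (fun x => dist p' x)
    rw [hx1e] at hsup
    exact absurd hsup (not_le.2 (hall x1 hx1))
  -- extract convex combination
  rw [Finset.convexHull_eq] at hpT
  obtain ⟨w, hw0, hw1, hwc⟩ := hpT
  rw [Finset.centerMass_eq_of_sum_1 _ _ hw1] at hwc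
  simp only [id_eq] at hwc
  -- the key inequality for each j ∈ T
  have hkey : ∀ j ∈ T, 2 * r ^ 2 ≤ (1 - w j) * D ^ 2 := by
    intro j hj
    have hnorm : ∀ i ∈ T, ‖i - p‖ = r := by
      intro i hi
      rw [← dist_eq_norm, dist_comm]
      exact hTr i hi
    have hident : ∑ i ∈ T, w i * ‖i - j‖ ^ 2 = 2 * r ^ 2 := by
      have hexp : ∀ i ∈ T, w i * ‖i - j‖ ^ 2
          = w i * ‖i - p‖ ^ 2 + w i * ‖j - p‖ ^ 2 - 2 * (w i * ⟪i - p, j - p⟫) := by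
        intro i hi
        have : i - j = (i - p) - (j - p) := by abel
        rw [this, norm_sub_sq_real]
        ring
      rw [Finset.sum_congr rfl hexp]
      rw [Finset.sum_sub_distrib, Finset.sum_add_distrib]
      have e1 : ∑ i ∈ T, w i * ‖i - p‖ ^ 2 = r ^ 2 := by
        rw [Finset.sum_congr rfl (fun i hi => by rw [hnorm i hi])]
        rw [← Finset.sum_mul, hw1, one_mul]
      have e2 : ∑ i ∈ T, w i * ‖j - p‖ ^ 2 = r ^ 2 := by
        rw [← Finset.sum_mul, hw1, one_mul, hnorm j hj]
      have e3 : ∑ i ∈ T, w i * ⟪i - p, j - p⟫ = 0 := by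
        have : ∀ i ∈ T, w i * ⟪i - p, j - p⟫ = ⟪w i • (i - p), j - p⟫ := by
          intro i hi
          rw [real_inner_smul_left]
        rw [Finset.sum_congr rfl this, ← sum_inner]
        have hz : ∑ i ∈ T, w i • (i - p) = 0 := by
          have : ∀ i ∈ T, w i • (i - p) = w i • i - w i • p := fun i _ => smul_sub _ _ _
          rw [Finset.sum_congr rfl this, Finset.sum_sub_distrib, hwc,
            ← Finset.sum_smul, hw1, one_smul, sub_self]
        rw [hz, inner_zero_left]
      rw [e1, e2, ← Finset.mul_sum, e3]
      ring
    have hbound : ∑ i ∈ T, w i * ‖i - j‖ ^ 2 ≤ (1 - w j) * D ^ 2 := by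
      have hj0 : w j * ‖j - j‖ ^ 2 = 0 := by simp
      rw [← Finset.add_sum_erase _ _ hj, hj0, zero_add]
      have : ∀ i ∈ T.erase j, w i * ‖i - j‖ ^ 2 ≤ w i * D ^ 2 := by
        intro i hi
        have hiT := Finset.mem_of_mem_erase hi
        apply mul_le_mul_of_nonneg_left _ (hw0 i hiT)
        have hd : ‖i - j‖ ≤ D := by
          rw [← dist_eq_norm]
          exact h i (hTsub hiT) j (hTsub hj)
        exact pow_le_pow_left₀ (norm_nonneg _) hd 2
      calc ∑ i ∈ T.erase j, w i * ‖i - j‖ ^ 2 ≤ ∑ i ∈ T.erase j, w i * D ^ 2 :=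
            Finset.sum_le_sum this
      _ = (∑ i ∈ T.erase j, w i) * D ^ 2 := by rw [Finset.sum_mul]
      _ = (1 - w j) * D ^ 2 := by rw [Finset.sum_erase_eq_sub hj, hw1]
    linarith [hident ▸ hbound]
  -- sum the key inequality over T
  set n : ℕ := T.card with hndef
  have hn1 : 1 ≤ n := Finset.card_pos.2 hTne
  have hn3 : n ≤ 3 := le_trans (Finset.card_le_card hTsub) hcard
  have hsumkey : (n : ℝ) * (2 * r ^ 2) ≤ ((n : ℝ) - 1) * D ^ 2 := by
    have := Finset.sum_le_sum hkey
    rw [Finset.sum_const, nsmul_eq_mul] at this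
    have e : ∑ j ∈ T, (1 - w j) * D ^ 2 = ((n : ℝ) - 1) * D ^ 2 := by
      rw [← Finset.sum_mul]
      congr 1
      rw [Finset.sum_sub_distrib, hw1, Finset.sum_const, nsmul_eq_mul, mul_one]
    rw [e] at this
    exact this
  have hn1' : (1 : ℝ) ≤ (n : ℝ) := by exact_mod_cast hn1
  have hn3' : (n : ℝ) ≤ 3 := by exact_mod_cast hn3
  have h3r : 3 * r ^ 2 ≤ D ^ 2 :=
    jung_arith hn1' hn3' (sq_nonneg D) hsumkey
  have hsq : r ^ 2 ≤ (D / Real.sqrt 3) ^ 2 := by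
    rw [div_pow, Real.sq_sqrt (by norm_num : (3:ℝ) ≥ 0)]
    linarith
  exact le_of_pow_le_pow_left₀ (by norm_num) hDr hsq

/-- Jung's theorem in the plane: a set of diameter at most `D` in `ℝ²` is contained in
a closed disk of radius `D/√3`. -/
theorem jung_plane (S : Set (EuclideanSpace ℝ (Fin 2))) (D : ℝ)
    (hb : Bornology.IsBounded S)
    (hD : ∀ x ∈ S, ∀ y ∈ S, dist x y ≤ D) :
    ∃ c : EuclideanSpace ℝ (Fin 2), S ⊆ closedBall c (D / Real.sqrt 3) := by
  classical
  rcases S.eq_empty_or_nonempty with rfl | hS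
  · exact ⟨0, by simp⟩
  obtain ⟨x0, hx0⟩ := hS
  have hD0 : 0 ≤ D := le_trans dist_nonneg (hD x0 hx0 x0 hx0)
  have key : (⋂ x : S, closedBall (x : E2) (D / Real.sqrt 3)).Nonempty := by
    apply Convex.helly_theorem_compact' (𝕜 := ℝ)
    · intro i; exact convex_closedBall _ _
    · intro i; exact isCompact_closedBall _ _
    · intro J hJ
      have hrank : Module.finrank ℝ (EuclideanSpace ℝ (Fin 2)) = 2 := by simp
      have hmem : ∀ x ∈ J.image (Subtype.val : S → E2), x ∈ S := by
        intro x hx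
        obtain ⟨i, _, rfl⟩ := Finset.mem_image.1 hx
        exact i.2
      obtain ⟨p, hp⟩ := jung_finset D hD0 (J.image Subtype.val)
        (le_trans Finset.card_image_le (by rw [hrank] at hJ; exact hJ))
        (fun x hx y hy => hD x (hmem x hx) y (hmem y hy))
      refine ⟨p, ?_⟩
      rw [Set.mem_iInter₂]
      intro i hi
      exact mem_closedBall.2 (hp i (Finset.mem_image_of_mem _ hi))
  obtain ⟨c, hc⟩ := key
  refine ⟨c, fun x hx => ?_⟩
  have := Set.mem_iInter.1 hc ⟨x, hx⟩
  rw [mem_closedBall] at this ⊢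
  rwa [dist_comm]
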